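/- Suppose a group G acts on a tree T by automorphisms, without inversions and without fixing any vertex. Let e be an edge of T, let E denote the vertex set of one of the two components of T − e and E* the vertex set of the other, and let g ∈ G. Then e and ge are distinct and coherently oriented if and only if gE ⊊ E or gE* ⊊ E*. -/

import Mathlib

/-!
Statement 8: with `G` acting on the tree `T` without inversions and without fixing a
vertex, `e` an edge of `T`, `E` the vertex set of one of the two components of `T − e`
(and `E* = Eᶜ` that of the other), and `g ∈ G`: the edges `e` and `ge` are distinct and
coherently oriented iff `gE ⊊ E` or `gE* ⊊ E*`.
-/

open scoped Pointwise

/-- Distinct oriented edges `(u,v)` and `(u',v')` of `T` are coherently oriented if the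
reduced path in `T` from `u` to `v'` traverses first the edge from `u` to `v` and
finally the edge from `u'` to `v'`. -/
def CoherentlyOriented {V : Type*} (T : SimpleGraph V) (u v u' v' : V) : Prop :=
  ∃ (p : T.Walk u v') (d₁ d₂ : T.Dart), p.IsPath ∧
    p.darts.head? = some d₁ ∧ d₁.toProd = (u, v) ∧
    p.darts.getLast? = some d₂ ∧ d₂.toProd = (u', v')

open SimpleGraph

namespace CohAux

variable {V : Type*} {T : SimpleGraph V}

def S (T : SimpleGraph V) (a b : V) : Set V :=
  {x | (T.deleteEdges {s(a, b)}).Reachable b x}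

lemma delete_swap (a b : V) : T.deleteEdges {s(b, a)} = T.deleteEdges {s(a, b)} := by
  rw [Sym2.eq_swap]

lemma not_mem_S (hT : T.IsAcyclic) {a b : V} (hab : T.Adj a b) : a ∉ S T a b := by
  intro h
  exact (isBridge_iff.mp ((isAcyclic_iff_forall_adj_isBridge.mp hT) hab)) h.symm

lemma mem_S_self {a b : V} : b ∈ S T a b := Reachable.refl _

lemma mem_S_self' {a b : V} : a ∈ S T b a := Reachable.refl _

lemma side_of_walk {a b : V} (hab : T.Adj a b) :
    ∀ {y x : V}, T.Walk y x → (y ∈ S T a b ∨ y ∈ S T b a) → (x ∈ S T a b ∨ x ∈ S T b a) := by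
  intro y x w
  induction w with
  | nil => exact id
  | @cons y c x h q ih =>
    intro hy
    refine ih ?_
    by_cases he : s(y, c) = s(a, b)
    · rcases Sym2.eq_iff.mp he with ⟨rfl, rfl⟩ | ⟨rfl, rfl⟩
      · exact Or.inl mem_S_self
      · exact Or.inr mem_S_self
    · have h1 : (T.deleteEdges {s(a, b)}).Adj y c := by
        rw [deleteEdges_adj]; exact ⟨h, by simpa using he⟩
      have h2 : (T.deleteEdges {s(b, a)}).Adj y c := by
        rw [deleteEdges_adj]; refine ⟨h, ?_⟩
        simpa [Sym2.eq_swap] using he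
      rcases hy with hy | hy
      · exact Or.inl (hy.trans h1.reachable)
      · exact Or.inr (hy.trans h2.reachable)

lemma mem_S_iff_not (hT : T.IsTree) {a b : V} (hab : T.Adj a b) (x : V) :
    x ∈ S T b a ↔ x ∉ S T a b := by
  constructor
  · intro h1 h2
    have : (T.deleteEdges {s(a, b)}).Reachable a x := by
      rw [← delete_swap a b]; exact h1
    exact not_mem_S hT.IsAcyclic hab (h2.trans this.symm)
  · intro h
    obtain ⟨w⟩ := hT.isConnected.preconnected b x
    rcases side_of_walk hab w (Or.inl mem_S_self) with h' | h'
    · exact absurd h' h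
    · exact h'

lemma reach_smul {G : Type*} [Group G] [MulAction G V]
    (hact : ∀ (g : G) (x y : V), T.Adj x y ↔ T.Adj (g • x) (g • y)) (g : G) {a b x y : V}
    (h : (T.deleteEdges {s(a, b)}).Reachable x y) :
    (T.deleteEdges {s(g • a, g • b)}).Reachable (g • x) (g • y) := by
  obtain ⟨w⟩ := h
  induction w with
  | nil => exact Reachable.refl _
  | @cons c d e h q ih =>
    rw [deleteEdges_adj] at h
    refine Reachable.trans (Adj.reachable ?_) ih
    rw [deleteEdges_adj]
    refine ⟨(hact g c d).mp h.1, ?_⟩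
    simp only [Set.mem_singleton_iff] at h ⊢
    intro he
    refine h.2 ?_
    rcases Sym2.eq_iff.mp he with ⟨h1, h2⟩ | ⟨h1, h2⟩
    · rw [MulAction.injective g h1, MulAction.injective g h2]
    · rw [MulAction.injective g h1, MulAction.injective g h2, Sym2.eq_swap]

lemma smul_S {G : Type*} [Group G] [MulAction G V]
    (hact : ∀ (g : G) (x y : V), T.Adj x y ↔ T.Adj (g • x) (g • y)) (g : G) (a b : V) :
    g • S T a b = S T (g • a) (g • b) := by
  ext x
  rw [Set.mem_smul_set_iff_inv_smul_mem]
  constructor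
  · intro h
    have := reach_smul hact g h
    rwa [smul_inv_smul] at this
  · intro h
    have := reach_smul hact g⁻¹ h
    rwa [inv_smul_smul, inv_smul_smul] at this

lemma avoid_edge {a b y x : V} (q : T.Walk y x) (ha : a ∉ q.support) :
    ∀ e ∈ q.edges, e ∉ ({s(a, b)} : Set (Sym2 V)) := by
  intro e he hmem
  rw [Set.mem_singleton_iff] at hmem
  subst hmem
  exact ha (q.fst_mem_support_of_mem_edges he)

lemma endpoint_mem {a b y : V} (p : T.Walk a y) (hp : p.IsPath)
    (d : T.Dart) (hd : p.darts.head? = some d) (hdp : d.toProd = (a, b)) : y ∈ S T a b := by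
  cases p with
  | nil => simp [Walk.darts_nil] at hd
  | @cons _ c _ h q =>
    rw [Walk.darts_cons, List.head?_cons, Option.some.injEq] at hd
    subst hd
    have hcb : c = b := congrArg Prod.snd hdp
    subst hcb
    have ha : a ∉ q.support := ((Walk.cons_isPath_iff h q).mp hp).2
    exact ⟨q.toDeleteEdges _ (avoid_edge q ha)⟩

lemma head_dart (hT : T.IsTree) {a b y : V} (hab : T.Adj a b) (p : T.Walk a y) (hp : p.IsPath)
    (hy : y ∈ S T a b) : ∃ d : T.Dart, p.darts.head? = some d ∧ d.toProd = (a, b) := by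
  cases p with
  | nil => exact absurd hy (not_mem_S hT.IsAcyclic hab)
  | @cons _ c _ h q =>
    have ha : a ∉ q.support := ((Walk.cons_isPath_iff h q).mp hp).2
    have hcb : c = b := by
      by_contra hcb
      have h1 : (T.deleteEdges {s(a, b)}).Reachable c y :=
        ⟨q.toDeleteEdges _ (avoid_edge q ha)⟩
      have h2 : c ∈ S T a b := hy.trans h1.symm
      have h3 : (T.deleteEdges {s(a, b)}).Adj c a := by
        rw [deleteEdges_adj]
        refine ⟨h.symm, ?_⟩
        simp only [Set.mem_singleton_iff]
        intro he
        rcases Sym2.eq_iff.mp he with ⟨h1', h2'⟩ | ⟨h1', h2'⟩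
        · exact hab.ne (h2' ▸ h1' ▸ rfl)
        · exact hcb h1'
      exact not_mem_S hT.IsAcyclic hab (h2.trans h3.reachable)
    subst hcb
    exact ⟨⟨(a, c), h⟩, by rw [Walk.darts_cons]; rfl, rfl⟩

lemma S_subset (hT : T.IsTree) {a b c d : V} (hcd : T.Adj c d)
    (hd : d ∈ S T a b) (ha : a ∈ S T d c) : S T c d ⊆ S T a b := by
  classical
  intro x hx
  obtain ⟨w⟩ := hx
  have haw : a ∉ w.support := by
    intro haw
    have h1 : (T.deleteEdges {s(c, d)}).Reachable d a := ⟨w.takeUntil a haw⟩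
    have h2 : (T.deleteEdges {s(c, d)}).Reachable c a := by
      rw [← delete_swap c d]; exact ha
    exact not_mem_S hT.IsAcyclic hcd (h1.trans h2.symm)
  have hw : ∀ e ∈ w.edges, e ∈ (T.deleteEdges {s(a, b)}).edgeSet := by
    intro e he
    rw [edgeSet_deleteEdges]
    refine ⟨?_, ?_⟩
    · exact ((edgeSet_deleteEdges _).subset (w.edges_subset_edgeSet he)).1
    · intro hmem
      rw [Set.mem_singleton_iff] at hmem
      subst hmem
      exact haw (w.fst_mem_support_of_mem_edges he)
  exact hd.trans ⟨w.transfer _ hw⟩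

lemma coherent_iff (hT : T.IsTree) {a b c d : V} (hab : T.Adj a b) (hcd : T.Adj c d) :
    CoherentlyOriented T a b c d ↔ (d ∈ S T a b ∧ a ∈ S T d c) := by
  constructor
  · rintro ⟨p, d₁, d₂, hp, h1, h2, h3, h4⟩
    refine ⟨endpoint_mem p hp d₁ h1 h2, ?_⟩
    have hrev : p.reverse.darts.head? = some d₂.symm := by
      rw [Walk.darts_reverse, List.head?_reverse, List.getLast?_map, h3]; rfl
    exact endpoint_mem p.reverse hp.reverse d₂.symm hrev
      (by rw [show d₂.symm.toProd = d₂.toProd.swap from rfl, h4, Prod.swap_prod_mk])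
  · rintro ⟨hd, ha⟩
    classical
    obtain ⟨w⟩ := hT.isConnected.preconnected a d
    obtain ⟨d₁, h1, h2⟩ := head_dart hT hab w.toPath.1 w.toPath.2 hd
    obtain ⟨d₂', h3, h4⟩ := head_dart hT hcd.symm (w.toPath.1).reverse (w.toPath.2).reverse ha
    rw [Walk.darts_reverse, List.head?_reverse, List.getLast?_map] at h3
    have h5 : (w.toPath.1).darts.getLast? = some d₂'.symm := by
      cases hg : (w.toPath.1).darts.getLast? with
      | none => rw [hg] at h3; simp at h3
      | some e =>
        rw [hg] at h3
        simp only [Option.map_some, Option.some.injEq] at h3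
        rw [← h3, Dart.symm_symm]
    refine ⟨w.toPath.1, d₁, d₂'.symm, w.toPath.2, h1, h2, h5, ?_⟩
    rw [show d₂'.symm.toProd = d₂'.toProd.swap from rfl, h4, Prod.swap_prod_mk]

lemma coherent_mem_iff_ssubset (hT : T.IsTree) {a b c d : V} (hab : T.Adj a b)
    (hcd : T.Adj c d) (hne : s(c, d) ≠ s(a, b)) :
    (d ∈ S T a b ∧ a ∈ S T d c) ↔ S T c d ⊂ S T a b := by
  rw [Set.ssubset_def]
  constructor
  · rintro ⟨hd, ha⟩
    refine ⟨S_subset hT hcd hd ha, fun hsub => ?_⟩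
    have hc : c ∈ S T a b := by
      have hadj : (T.deleteEdges {s(a, b)}).Adj d c := by
        rw [deleteEdges_adj]
        refine ⟨hcd.symm, ?_⟩
        rw [Set.mem_singleton_iff, Sym2.eq_swap]
        exact hne
      exact hd.trans hadj.reachable
    exact (mem_S_iff_not hT hcd c).mp mem_S_self' (hsub hc)
  · rintro ⟨hsub, -⟩
    refine ⟨hsub mem_S_self, (mem_S_iff_not hT hcd a).mpr fun h => ?_⟩
    exact not_mem_S hT.IsAcyclic hab (hsub h)

end CohAux

theorem coherently_oriented_iff_strict_containment
    {V G : Type*} [Group G] [MulAction G V] (T : SimpleGraph V) (hT : T.IsTree)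
    -- `G` acts on the tree `T` by automorphisms:
    (hact : ∀ (g : G) (x y : V), T.Adj x y ↔ T.Adj (g • x) (g • y))
    -- the action is without inversions:
    (hni : ∀ (g : G) (x y : V), T.Adj x y → ¬(g • x = y ∧ g • y = x))
    -- no vertex is fixed by every element of `G`:
    (hnofix : ¬ ∃ x : V, ∀ g : G, g • x = x)
    -- `e` is the edge of `T` with endpoints `u` and `v`:
    (u v : V) (huv : T.Adj u v)
    -- `E` is the vertex set of the component of `T − e` containing `v`:
    (E : Set V) (hE : E = {x : V | (T.deleteEdges {s(u, v)}).Reachable v x})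
    (g : G) :
    (s(g • u, g • v) ≠ s(u, v) ∧
      (CoherentlyOriented T u v (g • u) (g • v) ∨
        CoherentlyOriented T v u (g • v) (g • u))) ↔
      (g • E ⊂ E ∨ g • Eᶜ ⊂ Eᶜ) := by
  have hgadj : T.Adj (g • u) (g • v) := (hact g u v).mp huv
  have hE' : E = CohAux.S T u v := hE
  have hEc : Eᶜ = CohAux.S T v u := by
    ext x
    rw [Set.mem_compl_iff, hE']
    exact Iff.symm (CohAux.mem_S_iff_not hT huv x)
  have hgE : g • E = CohAux.S T (g • u) (g • v) := by rw [hE', CohAux.smul_S hact]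
  have hgEc : g • Eᶜ = CohAux.S T (g • v) (g • u) := by rw [hEc, CohAux.smul_S hact]
  constructor
  · rintro ⟨hne, hcoh⟩
    have hne' : s(g • v, g • u) ≠ s(v, u) := fun h =>
      hne (by rw [Sym2.eq_swap, h, Sym2.eq_swap])
    rcases hcoh with h | h
    · left
      rw [hgE, hE']
      exact (CohAux.coherent_mem_iff_ssubset hT huv hgadj hne).mp ((CohAux.coherent_iff hT huv hgadj).mp h)
    · right
      rw [hgEc, hEc]
      exact (CohAux.coherent_mem_iff_ssubset hT huv.symm hgadj.symm hne').mp
        ((CohAux.coherent_iff hT huv.symm hgadj.symm).mp h)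
  · intro hss
    have hne : s(g • u, g • v) ≠ s(u, v) := by
      intro h
      rcases Sym2.eq_iff.mp h with ⟨h1, h2⟩ | ⟨h1, h2⟩
      · rcases hss with hss | hss
        · have hEq : g • E = E := by rw [hgE, h1, h2, ← hE']
          rw [Set.ssubset_def] at hss
          exact hss.2 hEq.ge
        · have hEq : g • Eᶜ = Eᶜ := by rw [hgEc, h1, h2, ← hEc]
          rw [Set.ssubset_def] at hss
          exact hss.2 hEq.ge
      · exact hni g u v huv ⟨h1, h2⟩
    have hne' : s(g • v, g • u) ≠ s(v, u) := fun h =>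
      hne (by rw [Sym2.eq_swap, h, Sym2.eq_swap])
    refine ⟨hne, ?_⟩
    rcases hss with hss | hss
    · left
      refine (CohAux.coherent_iff hT huv hgadj).mpr
        ((CohAux.coherent_mem_iff_ssubset hT huv hgadj hne).mpr ?_)
      rwa [hgE, hE'] at hss
    · right
      refine (CohAux.coherent_iff hT huv.symm hgadj.symm).mpr
        ((CohAux.coherent_mem_iff_ssubset hT huv.symm hgadj.symm hne').mpr ?_)
      rwa [hgEc, hEc] at hss
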